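/- Let $f : [0,1] \to [0,1]$ be the map defined piecewise as the inverse of $w_0$ on $[0,A)$ and the inverse of $w_1$ on $[A,1]$, where $w_0(x)=\int_0^x \phi$, $w_1(x) = A + \int_0^x(1-\phi)$, and $\phi$ is a continuous strictly decreasing function with $\phi(0)=1$, $\phi(1)=0$. Then $f(0) = 0$, $f(1) = 1$, and for $x \in (0,A)$, $f'(x) = 1/\phi(f(x)) \ge 1$, while for $x \in (A,1)$, $f'(x) = 1/(1-\phi(f(x))) \ge 1$; moreover $f'(0) = f'(1) = 1$, so $0$ and $1$ are neutral fixed points of the expanding map $f$. -/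

import Mathlib

open Set

theorem stmt_12 (φ : ℝ → ℝ)
    (hcont : ContinuousOn φ (Set.Icc 0 1))
    (hanti : StrictAntiOn φ (Set.Icc 0 1))
    (h0 : φ 0 = 1) (h1 : φ 1 = 0)
    (A : ℝ) (hA : A = ∫ t in (0 : ℝ)..1, φ t)
    (w₀ w₁ : ℝ → ℝ)
    (hw₀ : ∀ x, w₀ x = ∫ t in (0 : ℝ)..x, φ t)
    (hw₁ : ∀ x, w₁ x = A + ∫ t in (0 : ℝ)..x, (1 - φ t))
    (f : ℝ → ℝ)
    (hf₀ : ∀ x ∈ Set.Ico 0 A, f x ∈ Set.Icc (0 : ℝ) 1 ∧ w₀ (f x) = x)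
    (hf₁ : ∀ x ∈ Set.Icc A 1, f x ∈ Set.Icc (0 : ℝ) 1 ∧ w₁ (f x) = x) :
    f 0 = 0 ∧ f 1 = 1 ∧
    (∀ x ∈ Set.Ioo 0 A, HasDerivAt f (1 / φ (f x)) x ∧ 1 ≤ 1 / φ (f x)) ∧
    (∀ x ∈ Set.Ioo A 1, HasDerivAt f (1 / (1 - φ (f x))) x ∧ 1 ≤ 1 / (1 - φ (f x))) ∧
    HasDerivWithinAt f 1 (Set.Icc 0 1) 0 ∧
    HasDerivWithinAt f 1 (Set.Icc 0 1) 1 := by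
  -- basic positivity facts about φ
  have hφpos : ∀ y ∈ Ico (0:ℝ) 1, 0 < φ y := by
    intro y hy
    have := hanti ⟨hy.1, hy.2.le⟩ (right_mem_Icc.2 zero_le_one) hy.2
    rwa [h1] at this
  have hφlt1 : ∀ y ∈ Ioc (0:ℝ) 1, φ y < 1 := by
    intro y hy
    have := hanti (left_mem_Icc.2 zero_le_one) ⟨hy.1.le, hy.2⟩ hy.1
    rwa [h0] at this
  -- integrability
  have hφint : ∀ a b : ℝ, a ∈ Icc (0:ℝ) 1 → b ∈ Icc (0:ℝ) 1 →
      IntervalIntegrable φ MeasureTheory.volume a b := by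
    intro a b ha hb
    refine (hcont.mono ?_).intervalIntegrable
    have h' : uIcc 0 1 = Icc (0:ℝ) 1 := uIcc_of_le zero_le_one
    exact (uIcc_subset_uIcc (h' ▸ ha) (h' ▸ hb)).trans h'.subset
  have hψcont : ContinuousOn (fun t => 1 - φ t) (Icc (0:ℝ) 1) := continuousOn_const.sub hcont
  have hψint : ∀ a b : ℝ, a ∈ Icc (0:ℝ) 1 → b ∈ Icc (0:ℝ) 1 →
      IntervalIntegrable (fun t => 1 - φ t) MeasureTheory.volume a b := by
    intro a b ha hb
    refine (hψcont.mono ?_).intervalIntegrable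
    have h' : uIcc 0 1 = Icc (0:ℝ) 1 := uIcc_of_le zero_le_one
    exact (uIcc_subset_uIcc (h' ▸ ha) (h' ▸ hb)).trans h'.subset
  -- strict monotonicity of w₀ and w₁ on [0,1]
  have hw₀mono : StrictMonoOn w₀ (Icc (0:ℝ) 1) := by
    intro a ha b hb hab
    rw [hw₀ a, hw₀ b, ← sub_pos,
      intervalIntegral.integral_interval_sub_left (hφint 0 b (left_mem_Icc.2 zero_le_one) hb)
        (hφint 0 a (left_mem_Icc.2 zero_le_one) ha)]
    refine intervalIntegral.intervalIntegral_pos_of_pos_on (hφint a b ha hb) ?_ hab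
    intro x hx
    exact hφpos x ⟨ha.1.trans hx.1.le, lt_of_lt_of_le hx.2 hb.2⟩
  have hw₁mono : StrictMonoOn w₁ (Icc (0:ℝ) 1) := by
    intro a ha b hb hab
    rw [hw₁ a, hw₁ b, add_lt_add_iff_left, ← sub_pos,
      intervalIntegral.integral_interval_sub_left (hψint 0 b (left_mem_Icc.2 zero_le_one) hb)
        (hψint 0 a (left_mem_Icc.2 zero_le_one) ha)]
    refine intervalIntegral.intervalIntegral_pos_of_pos_on (hψint a b ha hb) ?_ hab
    intro x hx
    have := hφlt1 x ⟨lt_of_le_of_lt ha.1 hx.1, hx.2.le.trans hb.2⟩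
    linarith
  -- values of w₀, w₁ at endpoints
  have hw₀0 : w₀ 0 = 0 := by rw [hw₀ 0, intervalIntegral.integral_same]
  have hw₀1 : w₀ 1 = A := by rw [hw₀ 1, hA]
  have hw₁0 : w₁ 0 = A := by rw [hw₁ 0, intervalIntegral.integral_same, add_zero]
  have hw₁1 : w₁ 1 = 1 := by
    rw [hw₁ 1, intervalIntegral.integral_sub intervalIntegrable_const
      (hφint 0 1 (left_mem_Icc.2 zero_le_one) (right_mem_Icc.2 zero_le_one)), ← hA]
    simp
  have h01 : (0:ℝ) ∈ Icc (0:ℝ) 1 := left_mem_Icc.2 zero_le_one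
  have h11 : (1:ℝ) ∈ Icc (0:ℝ) 1 := right_mem_Icc.2 zero_le_one
  have hApos : 0 < A := by
    have := hw₀mono h01 h11 zero_lt_one
    rwa [hw₀0, hw₀1] at this
  have hAlt1 : A < 1 := by
    have := hw₁mono h01 h11 zero_lt_one
    rwa [hw₁0, hw₁1] at this
  -- f 0 = 0 and f 1 = 1
  have hf0 : f 0 = 0 := by
    obtain ⟨hm, he⟩ := hf₀ 0 ⟨le_refl 0, hApos⟩
    exact hw₀mono.injOn hm h01 (by rw [he, hw₀0])
  have hf1 : f 1 = 1 := by
    obtain ⟨hm, he⟩ := hf₁ 1 ⟨hAlt1.le, le_refl 1⟩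
    exact hw₁mono.injOn hm h11 (by rw [he, hw₁1])
  -- values of f in the open intervals
  have hfval₀ : ∀ x ∈ Ioo 0 A, f x ∈ Ioo (0:ℝ) 1 := by
    intro x hx
    obtain ⟨hm, he⟩ := hf₀ x ⟨hx.1.le, hx.2⟩
    constructor
    · rcases lt_or_eq_of_le hm.1 with h | h
      · exact h
      · exfalso; rw [← h, hw₀0] at he; exact hx.1.ne he
    · rcases lt_or_eq_of_le hm.2 with h | h
      · exact h
      · exfalso; rw [h, hw₀1] at he; exact hx.2.ne' he
  have hfval₁ : ∀ x ∈ Ioo A 1, f x ∈ Ioo (0:ℝ) 1 := by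
    intro x hx
    obtain ⟨hm, he⟩ := hf₁ x ⟨hx.1.le, hx.2.le⟩
    constructor
    · rcases lt_or_eq_of_le hm.1 with h | h
      · exact h
      · exfalso; rw [← h, hw₁0] at he; exact hx.1.ne he
    · rcases lt_or_eq_of_le hm.2 with h | h
      · exact h
      · exfalso; rw [h, hw₁1] at he; exact hx.2.ne' he
  -- f inverts w₀ and w₁ on the appropriate sets
  have hrinv₀ : ∀ y ∈ Ico (0:ℝ) 1, f (w₀ y) = y := by
    intro y hy
    have hyI : y ∈ Icc (0:ℝ) 1 := ⟨hy.1, hy.2.le⟩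
    have hwy : w₀ y ∈ Ico 0 A := by
      constructor
      · rw [← hw₀0]; rcases eq_or_lt_of_le hy.1 with h | h
        · rw [h]
        · exact (hw₀mono h01 hyI h).le
      · rw [← hw₀1]; exact hw₀mono hyI h11 hy.2
    obtain ⟨hm, he⟩ := hf₀ (w₀ y) hwy
    exact hw₀mono.injOn hm hyI he
  have hrinv₁ : ∀ y ∈ Icc (0:ℝ) 1, f (w₁ y) = y := by
    intro y hyI
    have hwy : w₁ y ∈ Icc A 1 := by
      constructor
      · rw [← hw₁0]; rcases eq_or_lt_of_le hyI.1 with h | h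
        · rw [h]
        · exact (hw₁mono h01 hyI h).le
      · rw [← hw₁1]; rcases eq_or_lt_of_le hyI.2 with h | h
        · rw [h]
        · exact (hw₁mono hyI h11 h).le
    obtain ⟨hm, he⟩ := hf₁ (w₁ y) hwy
    exact hw₁mono.injOn hm hyI he
  -- surjectivity
  have hsurj₀ : Ioo (0:ℝ) 1 ⊆ f '' Ioo 0 A := by
    intro y hy
    refine ⟨w₀ y, ?_, hrinv₀ y ⟨hy.1.le, hy.2⟩⟩
    constructor
    · rw [← hw₀0]; exact hw₀mono h01 ⟨hy.1.le, hy.2.le⟩ hy.1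
    · rw [← hw₀1]; exact hw₀mono ⟨hy.1.le, hy.2.le⟩ h11 hy.2
  have hsurj₁ : Ioo (0:ℝ) 1 ⊆ f '' Ioo A 1 := by
    intro y hy
    refine ⟨w₁ y, ?_, hrinv₁ y ⟨hy.1.le, hy.2.le⟩⟩
    constructor
    · rw [← hw₁0]; exact hw₁mono h01 ⟨hy.1.le, hy.2.le⟩ hy.1
    · rw [← hw₁1]; exact hw₁mono ⟨hy.1.le, hy.2.le⟩ h11 hy.2
  -- strict monotonicity of f
  have hmono_f₀ : StrictMonoOn f (Ico 0 A) := by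
    intro a ha b hb hab
    by_contra h
    push_neg at h
    have := hw₀mono.monotoneOn (hf₀ b hb).1 (hf₀ a ha).1 h
    rw [(hf₀ a ha).2, (hf₀ b hb).2] at this
    linarith
  have hmono_f₁ : StrictMonoOn f (Icc A 1) := by
    intro a ha b hb hab
    by_contra h
    push_neg at h
    have := hw₁mono.monotoneOn (hf₁ b hb).1 (hf₁ a ha).1 h
    rw [(hf₁ a ha).2, (hf₁ b hb).2] at this
    linarith
  -- continuity of f on the interiors
  have hcontf₀ : ∀ x ∈ Ioo 0 A, ContinuousAt f x := by
    intro x hx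
    refine (hmono_f₀.mono Ioo_subset_Ico_self).continuousAt_of_image_mem_nhds
      (isOpen_Ioo.mem_nhds hx) ?_
    exact Filter.mem_of_superset (isOpen_Ioo.mem_nhds (hfval₀ x hx)) hsurj₀
  have hcontf₁ : ∀ x ∈ Ioo A 1, ContinuousAt f x := by
    intro x hx
    refine (hmono_f₁.mono Ioo_subset_Icc_self).continuousAt_of_image_mem_nhds
      (isOpen_Ioo.mem_nhds hx) ?_
    exact Filter.mem_of_superset (isOpen_Ioo.mem_nhds (hfval₁ x hx)) hsurj₁
  -- measurability helper
  have hmeasφ : ∀ l : Filter ℝ, Icc (0:ℝ) 1 ∈ l →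
      StronglyMeasurableAtFilter φ l MeasureTheory.volume :=
    fun l hl => ⟨Icc 0 1, hl, hcont.aestronglyMeasurable measurableSet_Icc⟩
  have hmeasψ : ∀ l : Filter ℝ, Icc (0:ℝ) 1 ∈ l →
      StronglyMeasurableAtFilter (fun t => 1 - φ t) l MeasureTheory.volume :=
    fun l hl => ⟨Icc 0 1, hl, hψcont.aestronglyMeasurable measurableSet_Icc⟩
  -- FTC at interior points
  have hFTC₀ : ∀ b ∈ Ioo (0:ℝ) 1, HasDerivAt w₀ (φ b) b := by
    intro b hb
    have hbn : Icc (0:ℝ) 1 ∈ nhds b := Icc_mem_nhds hb.1 hb.2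
    have := intervalIntegral.integral_hasDerivAt_right
      (hφint 0 b h01 ⟨hb.1.le, hb.2.le⟩) (hmeasφ _ hbn)
      ((hcont b ⟨hb.1.le, hb.2.le⟩).continuousAt hbn)
    exact this.congr_of_eventuallyEq (Filter.Eventually.of_forall fun y => (hw₀ y))
  have hFTC₁ : ∀ b ∈ Ioo (0:ℝ) 1, HasDerivAt w₁ (1 - φ b) b := by
    intro b hb
    have hbn : Icc (0:ℝ) 1 ∈ nhds b := Icc_mem_nhds hb.1 hb.2
    have := (intervalIntegral.integral_hasDerivAt_right
      (hψint 0 b h01 ⟨hb.1.le, hb.2.le⟩) (hmeasψ _ hbn)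
      ((hψcont b ⟨hb.1.le, hb.2.le⟩).continuousAt hbn)).const_add A
    exact this.congr_of_eventuallyEq (Filter.Eventually.of_forall fun y => (hw₁ y))
  -- interior derivative statements
  have hD₀ : ∀ x ∈ Ioo 0 A, HasDerivAt f (1 / φ (f x)) x ∧ 1 ≤ 1 / φ (f x) := by
    intro x hx
    have hfx := hfval₀ x hx
    have hpos : 0 < φ (f x) := hφpos _ ⟨hfx.1.le, hfx.2⟩
    have hle : φ (f x) ≤ 1 := (hφlt1 _ ⟨hfx.1, hfx.2.le⟩).le
    constructor
    · rw [one_div]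
      refine HasDerivAt.of_local_left_inverse (hcontf₀ x hx) (hFTC₀ (f x) hfx) hpos.ne' ?_
      exact Filter.eventually_of_mem (isOpen_Ioo.mem_nhds hx)
        fun y hy => (hf₀ y ⟨hy.1.le, hy.2⟩).2
    · exact one_le_one_div hpos hle
  have hD₁ : ∀ x ∈ Ioo A 1, HasDerivAt f (1 / (1 - φ (f x))) x ∧ 1 ≤ 1 / (1 - φ (f x)) := by
    intro x hx
    have hfx := hfval₁ x hx
    have hlt : φ (f x) < 1 := hφlt1 _ ⟨hfx.1, hfx.2.le⟩
    have hge : 0 ≤ φ (f x) := (hφpos _ ⟨hfx.1.le, hfx.2⟩).le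
    have hpos : 0 < 1 - φ (f x) := by linarith
    constructor
    · rw [one_div]
      refine HasDerivAt.of_local_left_inverse (hcontf₁ x hx) (hFTC₁ (f x) hfx) hpos.ne' ?_
      exact Filter.eventually_of_mem (isOpen_Ioo.mem_nhds hx)
        fun y hy => (hf₁ y ⟨hy.1.le, hy.2.le⟩).2
    · refine one_le_one_div hpos (by linarith)
  have hwfun₀ : w₀ = fun u => ∫ t in (0:ℝ)..u, φ t := funext hw₀
  have hwfun₁ : w₁ = fun u => A + ∫ t in (0:ℝ)..u, (1 - φ t) := funext hw₁
  refine ⟨hf0, hf1, hD₀, hD₁, ?_, ?_⟩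
  -- derivative within at 0
  · rw [hasDerivWithinAt_iff_tendsto_slope]
    have hmem : Ioo 0 A ∈ nhdsWithin 0 (Icc (0:ℝ) 1 \ {0}) := by
      rw [mem_nhdsWithin]
      exact ⟨Iio A, isOpen_Iio, hApos,
        fun y hy => ⟨lt_of_le_of_ne hy.2.1.1 (Ne.symm hy.2.2), hy.1⟩⟩
    have hcf : ContinuousWithinAt f (Ici (0:ℝ)) 0 := by
      refine hmono_f₀.continuousWithinAt_right_of_image_mem_nhdsWithin ?_ ?_
      · rw [mem_nhdsWithin]
        exact ⟨Iio A, isOpen_Iio, hApos, fun y hy => ⟨hy.2, hy.1⟩⟩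
      · rw [hf0, mem_nhdsWithin]
        refine ⟨Iio 1, isOpen_Iio, mem_Iio.mpr zero_lt_one, fun y hy => ?_⟩
        rcases eq_or_lt_of_le (mem_Ici.mp hy.2) with h | h
        · exact ⟨0, ⟨le_refl 0, hApos⟩, by rw [hf0, ← h]⟩
        · exact (image_mono (f := f) Ioo_subset_Ico_self) (hsurj₀ ⟨h, hy.1⟩)
    have htends : Filter.Tendsto f (nhdsWithin 0 (Icc (0:ℝ) 1 \ {0}))
        (nhdsWithin 0 (Icc (0:ℝ) 1 \ {0})) := by
      rw [tendsto_nhdsWithin_iff]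
      constructor
      · have h2 := hcf.tendsto
        rw [hf0] at h2
        exact h2.mono_left (nhdsWithin_mono 0 (fun y hy => hy.1.1))
      · filter_upwards [hmem] with y hy
        have h3 := hfval₀ y hy
        exact ⟨⟨h3.1.le, h3.2.le⟩, h3.1.ne'⟩
    have hw₀d : HasDerivWithinAt w₀ 1 (Icc (0:ℝ) 1) 0 := by
      have hIci : Icc (0:ℝ) 1 ∈ nhdsWithin 0 (Ioi (0:ℝ)) := by
        rw [mem_nhdsWithin]
        exact ⟨Iio 1, isOpen_Iio, mem_Iio.mpr zero_lt_one, fun y hy => ⟨hy.2.le, hy.1.le⟩⟩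
      have hcw : ContinuousWithinAt φ (Ioi (0:ℝ)) 0 := (hcont 0 h01).mono_of_mem_nhdsWithin hIci
      have h4 := intervalIntegral.integral_hasDerivWithinAt_right (hφint 0 0 h01 h01)
        (s := Ici 0) (t := Ioi 0) (hmeasφ _ hIci) hcw
      simpa [hwfun₀, h0] using h4.mono Icc_subset_Ici_self
    have hslope₀ : Filter.Tendsto (slope w₀ 0) (nhdsWithin 0 (Icc (0:ℝ) 1 \ {0}))
        (nhds 1) := hasDerivWithinAt_iff_tendsto_slope.mp hw₀d
    have hcomp : Filter.Tendsto (fun y => (slope w₀ 0 (f y))⁻¹)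
        (nhdsWithin 0 (Icc (0:ℝ) 1 \ {0})) (nhds 1) := by
      have h5 := (hslope₀.comp htends).inv₀ one_ne_zero
      simpa [Function.comp] using h5
    refine Filter.Tendsto.congr' ?_ hcomp
    filter_upwards [hmem] with y hy
    have hfy := hfval₀ y hy
    have he := (hf₀ y ⟨hy.1.le, hy.2⟩).2
    simp only [slope_def_field]
    rw [hf0, hw₀0, he, sub_zero, sub_zero]
    exact inv_div _ _
  -- derivative within at 1
  · rw [hasDerivWithinAt_iff_tendsto_slope]
    have hmem : Ioo A 1 ∈ nhdsWithin 1 (Icc (0:ℝ) 1 \ {1}) := by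
      rw [mem_nhdsWithin]
      exact ⟨Ioi A, isOpen_Ioi, hAlt1,
        fun y hy => ⟨hy.1, lt_of_le_of_ne hy.2.1.2 hy.2.2⟩⟩
    have hcf : ContinuousWithinAt f (Iic (1:ℝ)) 1 := by
      refine hmono_f₁.continuousWithinAt_left_of_image_mem_nhdsWithin ?_ ?_
      · rw [mem_nhdsWithin]
        exact ⟨Ioi A, isOpen_Ioi, hAlt1, fun y hy => ⟨hy.1.le, hy.2⟩⟩
      · rw [hf1, mem_nhdsWithin]
        refine ⟨Ioi 0, isOpen_Ioi, mem_Ioi.mpr zero_lt_one, fun y hy => ?_⟩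
        rcases eq_or_lt_of_le (mem_Iic.mp hy.2) with h | h
        · exact ⟨1, ⟨hAlt1.le, le_refl 1⟩, by rw [hf1, h]⟩
        · exact (image_mono (f := f) Ioo_subset_Icc_self) (hsurj₁ ⟨hy.1, h⟩)
    have htends : Filter.Tendsto f (nhdsWithin 1 (Icc (0:ℝ) 1 \ {1}))
        (nhdsWithin 1 (Icc (0:ℝ) 1 \ {1})) := by
      rw [tendsto_nhdsWithin_iff]
      constructor
      · have h2 := hcf.tendsto
        rw [hf1] at h2
        exact h2.mono_left (nhdsWithin_mono 1 (fun y hy => hy.1.2))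
      · filter_upwards [hmem] with y hy
        have h3 := hfval₁ y hy
        exact ⟨⟨h3.1.le, h3.2.le⟩, h3.2.ne⟩
    have hw₁d : HasDerivWithinAt w₁ 1 (Icc (0:ℝ) 1) 1 := by
      have hIic : Icc (0:ℝ) 1 ∈ nhdsWithin 1 (Iic (1:ℝ)) := by
        rw [mem_nhdsWithin]
        exact ⟨Ioi 0, isOpen_Ioi, mem_Ioi.mpr zero_lt_one, fun y hy => ⟨hy.1.le, hy.2⟩⟩
      have hcw : ContinuousWithinAt (fun t => 1 - φ t) (Iic (1:ℝ)) 1 :=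
        (hψcont 1 h11).mono_of_mem_nhdsWithin hIic
      have h4 := intervalIntegral.integral_hasDerivWithinAt_right (hψint 0 1 h01 h11)
        (s := Iic 1) (t := Iic 1) (hmeasψ _ hIic) hcw
      simpa [hwfun₁, h1] using (h4.const_add A).mono Icc_subset_Iic_self
    have hslope₁ : Filter.Tendsto (slope w₁ 1) (nhdsWithin 1 (Icc (0:ℝ) 1 \ {1}))
        (nhds 1) := hasDerivWithinAt_iff_tendsto_slope.mp hw₁d
    have hcomp : Filter.Tendsto (fun y => (slope w₁ 1 (f y))⁻¹)
        (nhdsWithin 1 (Icc (0:ℝ) 1 \ {1})) (nhds 1) := by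
      have h5 := (hslope₁.comp htends).inv₀ one_ne_zero
      simpa [Function.comp] using h5
    refine Filter.Tendsto.congr' ?_ hcomp
    filter_upwards [hmem] with y hy
    have hfy := hfval₁ y hy
    have he := (hf₁ y ⟨hy.1.le, hy.2.le⟩).2
    simp only [slope_def_field]
    rw [hf1, hw₁1, he]
    exact inv_div _ _
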